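/- Let a, b, c ∈ ℂ. The ℂ-bilinear product ∘ on A defined on basis elements by L_m∘L_n = cL_{m+n+1} − (n+1)L_{m+n}, L_m∘W_n = ((a−1)(m+1)−(n+1))W_{m+n} + bW_{m+n+1}, W_m∘L_n = 0 and W_m∘W_n = 0 is left-symmetric, and it is a compatible left-symmetric algebraic structure on the Lie algebra Coeff(W(a,b)). -/
import Mathlib


noncomputable section

/-- `A` is the free `ℂ`-vector space with basis `{L m : m ∈ ℤ} ∪ {W m : m ∈ ℤ}`. -/
abbrev A : Type := (ℤ ⊕ ℤ) →₀ ℂ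

/-- The basis vector `L m`. -/
def L (m : ℤ) : A := Finsupp.single (Sum.inl m) 1

/-- The basis vector `W m`. -/
def W (m : ℤ) : A := Finsupp.single (Sum.inr m) 1

/-- Corollary 3.8 (1). -/
theorem stmt12 (a b c : ℂ)
    -- `M` is the ℂ-bilinear product `∘` given on basis elements by:
    (M : A →ₗ[ℂ] A →ₗ[ℂ] A)
    (hLL : ∀ m n : ℤ, M (L m) (L n) = c • L (m + n + 1) - ((n : ℂ) + 1) • L (m + n))
    (hLW : ∀ m n : ℤ, M (L m) (W n) =
      ((a - 1) * ((m : ℂ) + 1) - ((n : ℂ) + 1)) • W (m + n) + b • W (m + n + 1))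
    (hWL : ∀ m n : ℤ, M (W m) (L n) = 0)
    (hWW : ∀ m n : ℤ, M (W m) (W n) = 0)
    -- `B` is the ℂ-bilinear Lie bracket of Coeff(W(a,b)) on basis elements:
    (B : A →ₗ[ℂ] A →ₗ[ℂ] A)
    (hBLL : ∀ m n : ℤ, B (L m) (L n) = ((m : ℂ) - (n : ℂ)) • L (m + n))
    (hBLW : ∀ m n : ℤ, B (L m) (W n) =
      (((m : ℂ) + 1) * (a - 1) - ((n : ℂ) + 1)) • W (m + n)
        + b • W (m + n + 1))
    (hBWL : ∀ m n : ℤ, B (W n) (L m) = -B (L m) (W n))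
    (hBWW : ∀ m n : ℤ, B (W m) (W n) = 0) :
    -- `∘ = M` is left-symmetric:
    ((∀ x y z : A, M (M x y) z - M x (M y z) = M (M y x) z - M y (M x z)) ∧
    -- and compatible with the Lie bracket:
    (∀ x y : A, M x y - M y x = B x y)) := by

  have hsl : ∀ (m : ℤ) (t : ℂ), (Finsupp.single (Sum.inl m) t : A) = t • L m := by
    intro m t; simp [L, Finsupp.smul_single]
  have hsr : ∀ (m : ℤ) (t : ℂ), (Finsupp.single (Sum.inr m) t : A) = t • W m := by
    intro m t; simp [W, Finsupp.smul_single]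
  constructor
  · -- left symmetry
    set T1 : A →ₗ[ℂ] A →ₗ[ℂ] A →ₗ[ℂ] A :=
      (LinearMap.llcomp ℂ A A (A →ₗ[ℂ] A) M).comp M with hT1
    set T2 : A →ₗ[ℂ] A →ₗ[ℂ] A →ₗ[ℂ] A :=
      (((LinearMap.llcomp ℂ A A A).comp M).compl₂ M) with hT2
    have key : T1 + T2.flip = T1.flip + T2 := by
      apply Finsupp.lhom_ext; intro s t
      apply Finsupp.lhom_ext; intro u v
      apply Finsupp.lhom_ext; intro w r
      obtain (m|m) := s <;> obtain (n|n) := u <;> obtain (p|p) := w <;>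
        simp only [hsl, hsr, map_smul, LinearMap.smul_apply, LinearMap.add_apply,
          LinearMap.flip_apply, hT1, hT2, LinearMap.comp_apply, LinearMap.llcomp_apply,
          LinearMap.compl₂_apply] <;>
        simp only [hLL, hLW, hWL, hWW, map_add, map_sub, map_smul, map_zero,
          LinearMap.add_apply, LinearMap.sub_apply, LinearMap.smul_apply,
          LinearMap.zero_apply, smul_zero, zero_sub, sub_zero, add_zero, zero_add,
          neg_zero, smul_neg] <;>
        push_cast <;> ring_nf <;> module
    intro x y z
    have h := LinearMap.congr_fun (LinearMap.congr_fun (LinearMap.congr_fun key x) y) z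
    simp only [LinearMap.add_apply, LinearMap.flip_apply, hT1, hT2,
      LinearMap.comp_apply, LinearMap.llcomp_apply, LinearMap.compl₂_apply] at h
    rw [sub_eq_sub_iff_add_eq_add]
    linear_combination (norm := abel) h
  · -- compatibility
    have key : M = B + M.flip := by
      apply Finsupp.lhom_ext; intro s t
      apply Finsupp.lhom_ext; intro u v
      obtain (m|m) := s <;> obtain (n|n) := u <;>
        simp only [hsl, hsr, map_smul, LinearMap.smul_apply, LinearMap.add_apply,
          LinearMap.flip_apply] <;>
        simp only [hLL, hLW, hWL, hWW, hBLL, hBLW, hBWL, hBWW, sub_zero, zero_sub,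
          smul_zero, smul_neg, neg_neg, add_zero, zero_add] <;>
        ring_nf <;> module
    intro x y
    have h := LinearMap.congr_fun (LinearMap.congr_fun key x) y
    simp only [LinearMap.add_apply, LinearMap.flip_apply] at h
    rw [sub_eq_iff_eq_add, h]


end
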